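/- For each i ≥ 0, the number of i-dimensional faces of the h-complex Δ_n (chains of i+1 subsets that are descent chains of permutations) equals the Eulerian number A(n, i+1), the number of permutations in S_n with exactly i+1 descents. -/

import Mathlib

set_option maxHeartbeats 1000000


/-- The chain `L` of subsets of `{1,…,n}` (encoded as `Finset (Fin n)`) with the
sentinels `S₀ = ∅` and `S_{j+1} = univ` adjoined. -/
def withSent (n : ℕ) (L : List (Finset (Fin n))) : List (Finset (Fin n)) :=
  (∅ :: L) ++ [Finset.univ]

/-- `L` is a face of the h-complex `Δₙ` of the truncated Boolean algebra: a strictly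
increasing chain of proper nonempty subsets such that, with sentinels adjoined,
every consecutive pair of blocks has `max (S_i \ S_{i-1}) > min (S_{i+1} \ S_i)`
(expressed as: some element of the lower difference exceeds some element of the
upper difference, which is equivalent since max ≥ a and min ≤ c). -/
def IsFace (n : ℕ) (L : List (Finset (Fin n))) : Prop :=
  (withSent n L).Chain' (· ⊂ ·) ∧
  ∀ i, ∀ h : i + 2 < (withSent n L).length,
    ∃ a ∈ (withSent n L).get ⟨i + 1, by omega⟩ \ (withSent n L).get ⟨i, by omega⟩,
      ∃ c ∈ (withSent n L).get ⟨i + 2, h⟩ \ (withSent n L).get ⟨i + 1, by omega⟩, c < a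

/-- The descent set of `π ∈ Sₙ` in one-line notation, as a set of 1-indexed ranks:
`k ∈ Des π` iff `1 ≤ k ≤ n-1` and the letter in position `k` exceeds the one in
position `k+1` (positions are 0-indexed internally). -/
def Des {n : ℕ} (π : Equiv.Perm (Fin n)) : Set ℕ :=
  {k | ∃ h : k < n, 0 < k ∧ π ⟨k, h⟩ < π ⟨k - 1, Nat.lt_of_le_of_lt (Nat.sub_le k 1) h⟩}

/-- The number of descents of `π`. -/
noncomputable def des {n : ℕ} (π : Equiv.Perm (Fin n)) : ℕ := (Des π).ncard

/-- `π({1,…,k})`: the image of the first `k` positions under `π`. -/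
def firstK {n : ℕ} (π : Equiv.Perm (Fin n)) (k : ℕ) : Finset (Fin n) :=
  (Finset.univ.filter fun i : Fin n => (i : ℕ) < k).image π


open Finset

noncomputable instance {n : ℕ} (π : Equiv.Perm (Fin n)) : DecidablePred (· ∈ Des π) :=
  Classical.decPred _

noncomputable def DesF {n : ℕ} (π : Equiv.Perm (Fin n)) : Finset ℕ :=
  (Finset.range n).filter (fun k => k ∈ Des π)

lemma mem_DesF {n : ℕ} {π : Equiv.Perm (Fin n)} {k : ℕ} : k ∈ DesF π ↔ k ∈ Des π := by
  simp only [DesF, mem_filter, mem_range, and_iff_right_iff_imp]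
  rintro ⟨h, -⟩; exact h

lemma des_eq_card {n : ℕ} (π : Equiv.Perm (Fin n)) : des π = (DesF π).card := by
  rw [des, show Des π = ↑(DesF π) by ext k; simp [mem_DesF], Set.ncard_coe_finset]

noncomputable def bfun {n : ℕ} (π : Equiv.Perm (Fin n)) (p : ℕ) : ℕ :=
  ((DesF π).filter (· ≤ p)).card

lemma bfun_mono {n : ℕ} (π : Equiv.Perm (Fin n)) {p q : ℕ} (h : p ≤ q) :
    bfun π p ≤ bfun π q := by
  apply Finset.card_le_card
  intro k hk
  rw [Finset.mem_filter] at hk ⊢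
  exact ⟨hk.1, le_trans hk.2 h⟩

lemma bfun_zero {n : ℕ} (π : Equiv.Perm (Fin n)) : bfun π 0 = 0 := by
  rw [bfun, Finset.card_eq_zero, Finset.filter_eq_empty_iff]
  intro k hk hk0
  rw [mem_DesF] at hk
  obtain ⟨h, h0, -⟩ := hk
  omega

lemma bfun_last {n : ℕ} (π : Equiv.Perm (Fin n)) : bfun π (n - 1) = des π := by
  rw [des_eq_card, bfun]
  congr 1
  rw [Finset.filter_eq_self]
  intro k hk
  have : k ∈ Des π := mem_DesF.1 hk
  obtain ⟨h, h0, -⟩ := this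
  omega

lemma bfun_succ {n : ℕ} (π : Equiv.Perm (Fin n)) (p : ℕ) :
    bfun π (p + 1) = bfun π p + (if p + 1 ∈ Des π then 1 else 0) := by
  have : (DesF π).filter (· ≤ p + 1) =
      (DesF π).filter (· ≤ p) ∪ (DesF π).filter (· = p + 1) := by
    rw [← Finset.filter_or]
    apply Finset.filter_congr
    intro k _
    constructor
    · intro h; omega
    · intro h; omega
  rw [bfun, this, Finset.card_union_of_disjoint, bfun]
  · congr 1
    by_cases h : p + 1 ∈ Des π
    · simp only [h, if_true]
      rw [Finset.filter_eq']
      simp [mem_DesF.2 h]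
    · simp only [h, if_false]
      rw [Finset.card_eq_zero, Finset.filter_eq_empty_iff]
      intro k hk hkeq
      exact h (hkeq ▸ mem_DesF.1 hk)
  · rw [Finset.disjoint_filter]
    intro k _ hk hk2
    omega

lemma bfun_succ_le {n : ℕ} (π : Equiv.Perm (Fin n)) (p : ℕ) :
    bfun π (p + 1) ≤ bfun π p + 1 := by
  rw [bfun_succ]; split <;> omega

-- discrete IVT
lemma bfun_surj {n : ℕ} (π : Equiv.Perm (Fin n)) (p m : ℕ) (hm : m ≤ bfun π p) :
    ∃ q ≤ p, bfun π q = m := by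
  induction p with
  | zero => exact ⟨0, le_refl _, by rw [bfun_zero] at hm ⊢; omega⟩
  | succ p ih =>
    by_cases h : m ≤ bfun π p
    · obtain ⟨q, hq, hq2⟩ := ih h
      exact ⟨q, by omega, hq2⟩
    · have := bfun_succ_le π p
      exact ⟨p + 1, le_refl _, by omega⟩

-- Fact C: equal bfun implies increasing
lemma mono_of_bfun_eq {n : ℕ} (π : Equiv.Perm (Fin n)) {p q : ℕ} (hpq : p ≤ q) (hq : q < n)
    (hb : bfun π p = bfun π q) : π ⟨p, by omega⟩ ≤ π ⟨q, hq⟩ := by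
  induction q with
  | zero =>
    have : p = 0 := by omega
    subst this; exact le_refl _
  | succ q ih =>
    rcases Nat.lt_or_ge p (q+1) with h | h
    · have hple : p ≤ q := by omega
      have h1 : bfun π p ≤ bfun π q := bfun_mono π hple
      have h2 : bfun π q ≤ bfun π (q+1) := bfun_mono π (by omega)
      have hnd : ¬ (q + 1 ∈ Des π) := by
        intro hd
        have := bfun_succ π q
        simp [hd] at this
        omega
      have hstep : π ⟨q, by omega⟩ ≤ π ⟨q + 1, hq⟩ := by
        by_contra hc
        push_neg at hc
        rcases lt_or_eq_of_le (le_of_not_gt (a := π ⟨q, by omega⟩) (b := π ⟨q + 1, hq⟩) (fun hcc => hnd ⟨hq, by omega, by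
          simpa using hcc⟩)) with h' | h'
        · exact absurd hc (not_lt_of_ge (le_of_lt h'))
        · exact absurd hc (not_lt_of_ge (le_of_eq h'))
      exact le_trans (ih hple (by omega) (by omega)) hstep
    · have : p = q + 1 := by omega
      subst this; exact le_refl _

lemma strict_of_bfun_eq {n : ℕ} (π : Equiv.Perm (Fin n)) {p q : ℕ} (hpq : p < q) (hq : q < n)
    (hb : bfun π p = bfun π q) : π ⟨p, by omega⟩ < π ⟨q, hq⟩ := by
  have h := mono_of_bfun_eq π (le_of_lt hpq) hq hb
  rcases lt_or_eq_of_le h with h' | h'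
  · exact h'
  · exfalso
    have := π.injective h'
    simp only [Fin.mk.injEq] at this
    omega


noncomputable def bval {n : ℕ} (π : Equiv.Perm (Fin n)) (x : Fin n) : ℕ :=
  bfun π (π.symm x : Fin n)

noncomputable def Sblk {n : ℕ} (π : Equiv.Perm (Fin n)) (m : ℕ) : Finset (Fin n) :=
  Finset.univ.filter (fun x => bval π x < m)

noncomputable def chainOf {n : ℕ} (π : Equiv.Perm (Fin n)) : List (Finset (Fin n)) :=
  (List.range (des π)).map (fun m => Sblk π (m + 1))

lemma bval_le {n : ℕ} (π : Equiv.Perm (Fin n)) (x : Fin n) : bval π x ≤ des π := by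
  rw [← bfun_last]
  exact bfun_mono π (by have := (π.symm x).isLt; omega)

lemma Sblk_zero {n : ℕ} (π : Equiv.Perm (Fin n)) : Sblk π 0 = ∅ := by
  ext x; simp [Sblk]

lemma Sblk_top {n : ℕ} (π : Equiv.Perm (Fin n)) : Sblk π (des π + 1) = Finset.univ := by
  ext x; simp [Sblk, Nat.lt_succ_iff, bval_le]

lemma withSent_chainOf {n : ℕ} (π : Equiv.Perm (Fin n)) :
    withSent n (chainOf π) = (List.range (des π + 2)).map (Sblk π) := by
  rw [withSent, chainOf]
  rw [show des π + 2 = (des π + 1) + 1 from rfl, List.range_succ, List.range_succ_eq_map]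
  simp only [List.map_append, List.map_cons, List.map_map, Sblk_zero, Sblk_top]
  rfl

lemma length_chainOf {n : ℕ} (π : Equiv.Perm (Fin n)) : (chainOf π).length = des π := by
  simp [chainOf]

lemma get_withSent_chainOf {n : ℕ} (π : Equiv.Perm (Fin n)) (m : ℕ)
    (h : m < (withSent n (chainOf π)).length) :
    (withSent n (chainOf π)).get ⟨m, h⟩ = Sblk π m := by
  have h2 : m < des π + 2 := by
    have := h; rw [withSent_chainOf] at this; simpa using this
  simp [withSent_chainOf]

lemma length_withSent {n : ℕ} (L : List (Finset (Fin n))) :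
    (withSent n L).length = L.length + 2 := by
  simp [withSent]

-- minimal position where bfun reaches m+1
lemma exists_desc_at {n : ℕ} (π : Equiv.Perm (Fin n)) (m : ℕ) (hm : m + 1 ≤ des π) (hn : 0 < n) :
    ∃ k, 0 < k ∧ k < n ∧ bfun π (k - 1) = m ∧ bfun π k = m + 1 ∧ k ∈ Des π := by
  have hex : ∃ q, q ≤ n - 1 ∧ bfun π q = m + 1 := by
    obtain ⟨q, hq, hq2⟩ := bfun_surj π (n - 1) (m + 1) (by rw [bfun_last]; omega)
    exact ⟨q, hq, hq2⟩
  obtain ⟨q, hq1, hq2⟩ := hex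
  have hexq : ∃ q, bfun π q = m + 1 := ⟨q, hq2⟩
  classical
  let k := Nat.find hexq
  have hk : bfun π k = m + 1 := Nat.find_spec hexq
  have hkmin : ∀ j < k, bfun π j ≠ m + 1 := fun j hj => Nat.find_min hexq hj
  have hkle : k ≤ q := Nat.find_min' hexq hq2
  have hk0 : 0 < k := by
    rcases Nat.eq_zero_or_pos k with h | h
    · exfalso; rw [h, bfun_zero] at hk; omega
    · exact h
  have hkpred : bfun π (k - 1) = m := by
    have h1 : bfun π (k - 1) ≤ bfun π k := bfun_mono π (by omega)
    have h2 : bfun π k ≤ bfun π (k - 1) + 1 := by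
      have := bfun_succ_le π (k - 1)
      rwa [show k - 1 + 1 = k by omega] at this
    have h3 := hkmin (k - 1) (by omega)
    omega
  have hdes : k ∈ Des π := by
    by_contra hnd
    have := bfun_succ π (k - 1)
    rw [show k - 1 + 1 = k by omega] at this
    simp [hnd] at this
    omega
  obtain ⟨hkn, -, -⟩ := id hdes
  exact ⟨k, hk0, hkn, hkpred, hk, hdes⟩

lemma isFace_chainOf {n i : ℕ} (π : Equiv.Perm (Fin n)) (hdes : des π = i + 1) :
    IsFace n (chainOf π) := by
  have hn : 0 < n := by
    rw [des] at hdes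
    have : (Des π).Nonempty := by
      by_contra h
      rw [Set.not_nonempty_iff_eq_empty] at h
      rw [h] at hdes; simp at hdes
    obtain ⟨k, hk, -, -⟩ := this
    omega
  have hblk : ∀ m ≤ des π, ∃ x, bval π x = m := by
    intro m hm
    obtain ⟨q, hq, hq2⟩ := bfun_surj π (n - 1) m (by rw [bfun_last]; omega)
    refine ⟨π ⟨q, by omega⟩, ?_⟩
    rw [bval, Equiv.symm_apply_apply]
    exact hq2
  have hSmono : ∀ m ≤ des π, Sblk π m ⊂ Sblk π (m + 1) := by
    intro m hm
    constructor
    · intro x hx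
      rw [Sblk, Finset.mem_filter] at hx ⊢
      exact ⟨hx.1, by omega⟩
    · intro hsub
      obtain ⟨x, hx⟩ := hblk m hm
      have h1 : x ∈ Sblk π (m + 1) := by rw [Sblk, Finset.mem_filter]; exact ⟨Finset.mem_univ _, by omega⟩
      have h2 : x ∉ Sblk π m := by rw [Sblk, Finset.mem_filter]; push_neg; intro; omega
      exact h2 (hsub h1)
  constructor
  · rw [withSent_chainOf]
    show List.IsChain _ _
    rw [List.isChain_map]
    rw [List.isChain_range_succ (fun a b => Sblk π a ⊂ Sblk π b) (des π + 1)]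
    intro m hm
    exact hSmono m (by omega)
  · intro m h
    rw [get_withSent_chainOf, get_withSent_chainOf, get_withSent_chainOf]
    have hm : m + 1 ≤ des π := by
      rw [length_withSent, length_chainOf] at h; omega
    obtain ⟨k, hk0, hkn, hkpred, hk, hkdes⟩ := exists_desc_at π m hm hn
    obtain ⟨hkn', -, hdesc⟩ := hkdes
    refine ⟨π ⟨k - 1, by omega⟩, ?_, π ⟨k, hkn⟩, ?_, ?_⟩
    · have : bval π (π ⟨k - 1, by omega⟩) = m := by
        rw [bval, Equiv.symm_apply_apply]; exact hkpred
      simp only [Finset.mem_sdiff, Sblk, Finset.mem_filter, Finset.mem_univ, true_and, this]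
      omega
    · have : bval π (π ⟨k, hkn⟩) = m + 1 := by
        rw [bval, Equiv.symm_apply_apply]; exact hk
      simp only [Finset.mem_sdiff, Sblk, Finset.mem_filter, Finset.mem_univ, true_and, this]
      omega
    · exact hdesc

def cnt {n : ℕ} (L : List (Finset (Fin n))) (x : Fin n) : ℕ :=
  (L.filter (fun S => x ∉ S)).length

lemma cnt_le {n : ℕ} (L : List (Finset (Fin n))) (x : Fin n) : cnt L x ≤ L.length :=
  List.length_filter_le _ _

-- general lemma for pairwise-increasing chains
lemma mem_get_iff_cnt {n : ℕ} {L : List (Finset (Fin n))} (hL : L.Pairwise (· ⊂ ·))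
    (x : Fin n) : ∀ m (h : m < L.length), (x ∈ L.get ⟨m, h⟩ ↔ cnt L x ≤ m) := by
  induction L with
  | nil => intro m h; simp at h
  | cons S L' ih =>
    intro m h
    rw [List.pairwise_cons] at hL
    rcases m with - | m
    · simp only [List.get]
      constructor
      · intro hx
        have : ∀ S' ∈ L', x ∈ S' := fun S' hS' => (hL.1 S' hS').1 hx
        have : cnt (S :: L') x = 0 := by
          rw [cnt, List.length_eq_zero_iff, List.filter_eq_nil_iff]
          intro T hT
          simp only [List.mem_cons] at hT
          rcases hT with rfl | hT
          · simp [hx]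
          · simp [this T hT]
        omega
      · intro hc
        by_contra hx
        have : cnt (S :: L') x ≥ 1 := by
          rw [cnt, List.filter_cons]
          simp [hx]
        omega
    · simp only [List.get]
      by_cases hx : x ∈ S
      · have hall : ∀ S' ∈ L', x ∈ S' := fun S' hS' => (hL.1 S' hS').1 hx
        have h1 : x ∈ L'.get ⟨m, by simpa using h⟩ := hall _ (List.get_mem _ _)
        have h0 : cnt (S :: L') x = 0 := by
          rw [cnt, List.length_eq_zero_iff, List.filter_eq_nil_iff]
          intro T hT
          simp only [List.mem_cons] at hT
          rcases hT with rfl | hT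
          · simp [hx]
          · simp [hall T hT]
        simp only [h1, true_iff]
        omega
      · rw [ih hL.2 m (by simpa using h)]
        have : cnt (S :: L') x = cnt L' x + 1 := by
          rw [cnt, cnt, List.filter_cons]
          simp [hx]
        omega

lemma pairwise_of_face {n : ℕ} {L : List (Finset (Fin n))}
    (hC : (withSent n L).Chain' (· ⊂ ·)) : L.Pairwise (· ⊂ ·) := by
  have h1 : (withSent n L).Pairwise (· ⊂ ·) := List.isChain_iff_pairwise.mp hC
  have h2 : L.Sublist (withSent n L) := by
    rw [withSent]
    exact ((List.sublist_cons_self _ _).trans (List.sublist_append_left _ _))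
  exact h1.sublist h2

lemma mem_withSent_get_iff {n : ℕ} {L : List (Finset (Fin n))}
    (hC : (withSent n L).Chain' (· ⊂ ·)) (x : Fin n) :
    ∀ m (h : m < (withSent n L).length),
      (x ∈ (withSent n L).get ⟨m, h⟩ ↔ cnt L x < m) := by
  have hP := pairwise_of_face hC
  intro m h
  have hlen : m < L.length + 2 := by rwa [length_withSent] at h
  have hws : withSent n L = ∅ :: (L ++ [Finset.univ]) := by simp [withSent]
  rcases m with - | m
  · simp only [List.get_eq_getElem, hws, List.getElem_cons_zero]
    simp
  · simp only [List.get_eq_getElem, hws, List.getElem_cons_succ]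
    by_cases hm : m < L.length
    · rw [List.getElem_append_left hm]
      have h3 := mem_get_iff_cnt hP x m hm
      simp only [List.get_eq_getElem] at h3
      rw [h3]
      omega
    · have hm2 : m = L.length := by omega
      rw [List.getElem_append_right (by omega)]
      simp only [hm2, Nat.sub_self, List.getElem_singleton]
      simp only [Finset.mem_univ, true_iff]
      have := cnt_le L x
      omega

lemma exists_cnt_eq {n : ℕ} {L : List (Finset (Fin n))}
    (hC : (withSent n L).Chain' (· ⊂ ·)) {v : ℕ} (hv : v ≤ L.length) :
    ∃ x : Fin n, cnt L x = v := by
  have hlen := length_withSent L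
  have hchain := List.isChain_iff_getElem.mp hC
  have h := hchain v (by omega)
  obtain ⟨-, hne⟩ := h
  rw [Finset.not_subset] at hne
  obtain ⟨x, hx1, hx2⟩ := hne
  change x ∈ (withSent n L).get ⟨v+1, by omega⟩ at hx1
  change x ∉ (withSent n L).get ⟨v, by omega⟩ at hx2
  rw [mem_withSent_get_iff hC x (v+1) (by omega)] at hx1
  rw [mem_withSent_get_iff hC x v (by omega)] at hx2
  exact ⟨x, by omega⟩

noncomputable def keyL {n : ℕ} (L : List (Finset (Fin n))) (x : Fin n) : ℕ ×ₗ Fin n :=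
  toLex (cnt L x, x)

noncomputable def sortPerm {n : ℕ} (L : List (Finset (Fin n))) : Equiv.Perm (Fin n) :=
  Tuple.sort (keyL L)

lemma keyL_injective {n : ℕ} (L : List (Finset (Fin n))) : Function.Injective (keyL L) := by
  intro a b h
  have := congrArg (fun y : ℕ ×ₗ Fin n => (ofLex y).2) h
  simpa [keyL] using this

lemma sortPerm_strictMono {n : ℕ} (L : List (Finset (Fin n))) :
    StrictMono (keyL L ∘ sortPerm L) :=
  (Tuple.monotone_sort (keyL L)).strictMono_of_injective
    ((keyL_injective L).comp (sortPerm L).injective)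

lemma sortPerm_lex {n : ℕ} (L : List (Finset (Fin n))) {p q : Fin n} (h : p < q) :
    cnt L (sortPerm L p) < cnt L (sortPerm L q) ∨
      (cnt L (sortPerm L p) = cnt L (sortPerm L q) ∧ sortPerm L p < sortPerm L q) := by
  have := sortPerm_strictMono L h
  rwa [Function.comp_apply, Function.comp_apply, keyL, keyL, Prod.Lex.lt_iff] at this

attribute [irreducible] sortPerm

lemma cnt_sortPerm_mono {n : ℕ} (L : List (Finset (Fin n))) {p q : Fin n} (h : p ≤ q) :
    cnt L (sortPerm L p) ≤ cnt L (sortPerm L q) := by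
  rcases lt_or_eq_of_le h with h | h
  · rcases sortPerm_lex L h with h' | h' <;> omega
  · rw [h]

section FaceLemmas

variable {n : ℕ} {L : List (Finset (Fin n))} (hface : IsFace n L)
include hface

lemma cnt_sortPerm_zero (h0 : 0 < n) :
    cnt L (sortPerm L ⟨0, h0⟩) = 0 := by
  obtain ⟨x, hx⟩ := exists_cnt_eq hface.1 (Nat.zero_le L.length)
  have := cnt_sortPerm_mono L (show (⟨0, h0⟩ : Fin n) ≤ (sortPerm L).symm x from
    Fin.mk_le_mk.mpr (Nat.zero_le _))
  rw [Equiv.apply_symm_apply, hx] at this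
  omega

lemma cnt_sortPerm_last (h0 : 0 < n) :
    cnt L (sortPerm L ⟨n - 1, by omega⟩) = L.length := by
  obtain ⟨x, hx⟩ := exists_cnt_eq hface.1 (le_refl L.length)
  have h1 := cnt_sortPerm_mono L (show (sortPerm L).symm x ≤ (⟨n - 1, by omega⟩ : Fin n) from
    by rw [Fin.le_def]; exact Nat.le_sub_one_of_lt ((sortPerm L).symm x).isLt)
  rw [Equiv.apply_symm_apply, hx] at h1
  have h2 := cnt_le L (sortPerm L ⟨n - 1, by omega⟩)
  omega

lemma cnt_sortPerm_jump {p q : Fin n} (hq : (q : ℕ) = (p : ℕ) + 1) :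
    cnt L (sortPerm L q) ≤ cnt L (sortPerm L p) + 1 := by
  by_contra hc
  push_neg at hc
  have hv : cnt L (sortPerm L p) + 1 ≤ L.length := by
    have := cnt_le L (sortPerm L q); omega
  obtain ⟨x, hx⟩ := exists_cnt_eq hface.1 hv
  set r := (sortPerm L).symm x with hr
  have hxr : cnt L (sortPerm L r) = cnt L (sortPerm L p) + 1 := by
    rw [hr, Equiv.apply_symm_apply]; exact hx
  have h1 : p < r := by
    by_contra h
    push_neg at h
    have := cnt_sortPerm_mono L h
    omega
  have h2 : r < q := by
    by_contra h
    push_neg at h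
    have := cnt_sortPerm_mono L h
    omega
  rw [Fin.lt_def] at h1 h2
  omega

lemma des_iff_jump {p : Fin n} (hp : 0 < (p : ℕ)) :
    (p : ℕ) ∈ Des (sortPerm L) ↔
      cnt L (sortPerm L p) = cnt L (sortPerm L ⟨(p : ℕ) - 1, by omega⟩) + 1 := by
  have hplt : (⟨(p : ℕ) - 1, by omega⟩ : Fin n) < p := by
    rw [Fin.lt_def]; simp; omega
  constructor
  · intro hd
    obtain ⟨h, -, hdesc⟩ := hd
    have hdesc' : sortPerm L p < sortPerm L ⟨(p : ℕ) - 1, by omega⟩ := by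
      have e1 : (⟨(p : ℕ), h⟩ : Fin n) = p := Fin.eta p h
      rwa [e1] at hdesc
    rcases sortPerm_lex L hplt with h' | h'
    · have := cnt_sortPerm_jump hface
        (p := ⟨(p : ℕ) - 1, by omega⟩) (q := p) (by simp; omega)
      omega
    · exact absurd hdesc' (not_lt_of_gt h'.2)
  · intro hjump
    have hmlt : cnt L (sortPerm L ⟨(p : ℕ) - 1, by omega⟩) + 2 < (withSent n L).length := by
      rw [length_withSent]
      have := cnt_le L (sortPerm L p)
      omega
    obtain ⟨a, ha, c, hc, hca⟩ := hface.2 _ hmlt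
    rw [Finset.mem_sdiff] at ha hc
    rw [mem_withSent_get_iff hface.1 a _ _, mem_withSent_get_iff hface.1 a _ _] at ha
    rw [mem_withSent_get_iff hface.1 c _ _, mem_withSent_get_iff hface.1 c _ _] at hc
    have hcnta : cnt L a = cnt L (sortPerm L ⟨(p : ℕ) - 1, by omega⟩) := by omega
    have hcntc : cnt L c = cnt L (sortPerm L ⟨(p : ℕ) - 1, by omega⟩) + 1 := by omega
    have hale : a ≤ sortPerm L ⟨(p : ℕ) - 1, by omega⟩ := by
      have hra : sortPerm L ((sortPerm L).symm a) = a := Equiv.apply_symm_apply _ _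
      rcases lt_trichotomy ((sortPerm L).symm a) (⟨(p : ℕ) - 1, by omega⟩ : Fin n)
        with h' | h' | h'
      · rcases sortPerm_lex L h' with h'' | h''
        · rw [hra, hcnta] at h''; omega
        · rw [← hra]; exact le_of_lt h''.2
      · rw [← hra, h']
      · exfalso
        have hple : p ≤ (sortPerm L).symm a := by
          rw [Fin.le_def]; rw [Fin.lt_def] at h'; simp at h'; omega
        have := cnt_sortPerm_mono L hple
        rw [hra, hcnta] at this
        omega
    have hcge : sortPerm L p ≤ c := by
      have hrc : sortPerm L ((sortPerm L).symm c) = c := Equiv.apply_symm_apply _ _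
      rcases lt_trichotomy p ((sortPerm L).symm c) with h' | h' | h'
      · rcases sortPerm_lex L h' with h'' | h''
        · rw [hrc, hcntc] at h''; omega
        · rw [← hrc]; exact le_of_lt h''.2
      · rw [← hrc, ← h']
      · exfalso
        have hrle : (sortPerm L).symm c ≤ (⟨(p : ℕ) - 1, by omega⟩ : Fin n) := by
          rw [Fin.le_def]; rw [Fin.lt_def] at h'; simp; omega
        have h2 := cnt_sortPerm_mono (L := L) (p := (sortPerm L).symm c)
          (q := ⟨(p : ℕ) - 1, Nat.lt_of_le_of_lt (Nat.sub_le _ _) p.isLt⟩) hrle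
        rw [hrc, hcntc] at h2
        omega
    refine ⟨p.isLt, hp, ?_⟩
    have e1 : (⟨(p : ℕ), p.isLt⟩ : Fin n) = p := Fin.eta p p.isLt
    rw [e1]
    calc sortPerm L p ≤ c := hcge
      _ < a := hca
      _ ≤ sortPerm L ⟨(p : ℕ) - 1, by omega⟩ := hale

lemma bfun_sortPerm_eq : ∀ k (h : k < n), bfun (sortPerm L) k = cnt L (sortPerm L ⟨k, h⟩) := by
  intro k
  induction k with
  | zero => intro h; rw [bfun_zero, cnt_sortPerm_zero hface h]
  | succ k ih =>
    intro h
    have hk : k < n := by omega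
    rw [bfun_succ, ih hk]
    have hjle := cnt_sortPerm_jump hface
      (show ((⟨k+1, h⟩ : Fin n) : ℕ) = ((⟨k, hk⟩ : Fin n) : ℕ) + 1 by simp)
    have hmono := cnt_sortPerm_mono L (show (⟨k, hk⟩ : Fin n) ≤ ⟨k+1, h⟩ by
      rw [Fin.le_def]; simp)
    have hiff := des_iff_jump hface (p := ⟨k+1, h⟩) (by simp)
    simp only [show ((⟨k+1, h⟩ : Fin n) : ℕ) = k + 1 from rfl,
      show k + 1 - 1 = k from rfl] at hiff
    by_cases hd : k + 1 ∈ Des (sortPerm L)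
    · rw [hiff.1 hd]
      simp [hd]
    · simp only [hd, if_false]
      have := (not_iff_not.mpr hiff).1 hd
      omega

lemma des_sortPerm : des (sortPerm L) = L.length := by
  have h0 : 0 < n := by
    obtain ⟨x, -⟩ := exists_cnt_eq hface.1 (Nat.zero_le L.length)
    exact Fin.pos x
  rw [← bfun_last, bfun_sortPerm_eq hface (n-1) (by omega), cnt_sortPerm_last hface h0]

lemma bval_sortPerm (x : Fin n) : bval (sortPerm L) x = cnt L x := by
  rw [bval, bfun_sortPerm_eq hface _ ((sortPerm L).symm x).isLt]
  congr 1
  rw [Fin.eta, Equiv.apply_symm_apply]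

lemma chainOf_sortPerm : chainOf (sortPerm L) = L := by
  have hlen : (chainOf (sortPerm L)).length = L.length := by
    rw [length_chainOf, des_sortPerm hface]
  apply List.ext_getElem hlen
  intro m hm hm'
  have hm2 : m < des (sortPerm L) := by rwa [← length_chainOf]
  simp only [chainOf, List.getElem_map, List.getElem_range]
  ext x
  rw [Sblk, Finset.mem_filter, bval_sortPerm hface]
  have := mem_get_iff_cnt (pairwise_of_face hface.1) x m hm'
  simp only [List.get_eq_getElem] at this
  rw [this]
  simp only [Finset.mem_univ, true_and]
  omega

end FaceLemmas

lemma length_filter_range_lt (B j : ℕ) :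
    ((List.range j).filter (fun m => decide (m < B))).length = min B j := by
  induction j with
  | zero => simp
  | succ j ih =>
    rw [List.range_succ, List.filter_append, List.length_append, ih]
    by_cases h : j < B
    · simp [h]; omega
    · simp [h]; omega

lemma cnt_chainOf {n : ℕ} (π : Equiv.Perm (Fin n)) (x : Fin n) :
    cnt (chainOf π) x = bval π x := by
  rw [cnt, chainOf, List.filter_map, List.length_map]
  have hcong : ∀ m ∈ List.range (des π),
      (decide (x ∉ Sblk π (m+1)) : Bool) = decide (m < bval π x) := by
    intro m _
    simp only [decide_eq_decide, Sblk, Finset.mem_filter, Finset.mem_univ, true_and]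
    omega
  rw [show ((fun S => decide (x ∉ S)) ∘ fun m => Sblk π (m + 1)) =
      fun m => decide (x ∉ Sblk π (m + 1)) from rfl]
  rw [List.filter_congr hcong, length_filter_range_lt]
  have := bval_le π x
  omega

lemma sortPerm_chainOf {n : ℕ} (π : Equiv.Perm (Fin n)) : sortPerm (chainOf π) = π := by
  have hmono : Monotone (keyL (chainOf π) ∘ π) := by
    intro p q hpq
    simp only [Function.comp_apply, keyL, cnt_chainOf, Prod.Lex.le_iff]
    have hb : bval π (π p) = bfun π (p : ℕ) := by
      rw [bval, Equiv.symm_apply_apply]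
    have hb' : bval π (π q) = bfun π (q : ℕ) := by
      rw [bval, Equiv.symm_apply_apply]
    rw [hb, hb']
    rcases lt_or_eq_of_le (bfun_mono π (show (p:ℕ) ≤ (q:ℕ) from hpq)) with h | h
    · exact Or.inl h
    · right
      refine ⟨h, ?_⟩
      have := mono_of_bfun_eq π (show (p:ℕ) ≤ (q:ℕ) from hpq) q.isLt h
      simpa [Fin.eta] using this
  have := Tuple.comp_sort_eq_comp_iff_monotone.mpr hmono
  rw [show Tuple.sort (keyL (chainOf π)) = sortPerm (chainOf π) from by
    rw [sortPerm]] at this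
  apply Equiv.ext
  intro p
  exact ((keyL_injective (chainOf π)) (congrFun this p)).symm


/-- the number of `i`-dimensional faces of `Δₙ` (chains of `i+1`
subsets satisfying the face condition) equals the Eulerian number `A(n, i+1)`,
the number of permutations of `Sₙ` with exactly `i+1` descents. -/
theorem card_faces_eq_eulerian (n i : ℕ) :
    Nat.card {L : List (Finset (Fin n)) // IsFace n L ∧ L.length = i + 1} =
      Nat.card {π : Equiv.Perm (Fin n) // des π = i + 1} := by
  apply Nat.card_eq_of_bijective
    (fun L => ⟨sortPerm L.1, by rw [des_sortPerm L.2.1, L.2.2]⟩)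
  constructor
  · rintro ⟨L₁, h₁⟩ ⟨L₂, h₂⟩ h
    simp only [Subtype.mk.injEq] at h ⊢
    rw [← chainOf_sortPerm h₁.1, ← chainOf_sortPerm h₂.1, h]
  · rintro ⟨π, hπ⟩
    refine ⟨⟨chainOf π, isFace_chainOf π hπ, by rw [length_chainOf, hπ]⟩, ?_⟩
    simp only [Subtype.mk.injEq]
    exact sortPerm_chainOf π
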